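/- Let m be a positive integer and let a, b, c be real numbers with m−a > 0 and c ≠ 0, such that none of a, b, c, a−b is an integer. Then Σ_{k=0}^{∞} (a)_k (b)_k (c+1)_k / ((c)_k (b+m+1)_k · k!) = Γ(m−a)·((m−a)·c + a·b)·Γ(b+m+1) / (c·Γ(m+1)·Γ(b+m−a+1)). -/

import Mathlib

set_option maxHeartbeats 1000000

open scoped BigOperators
open Finset
open Filter Real Set Topology

/-- Pochhammer (ascending factorial) `(x)_k = x (x+1) ⋯ (x+k-1)`. -/
noncomputable def poch (x : ℝ) (k : ℕ) : ℝ := Polynomial.eval x (ascPochhammer ℝ k)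

lemma poch_zero (x : ℝ) : poch x 0 = 1 := by simp [poch]
lemma poch_one (x : ℝ) : poch x 1 = x := by simp [poch]
lemma poch_succ (x : ℝ) (k : ℕ) : poch x (k+1) = poch x k * (x + k) := by
  simp [poch, ascPochhammer_succ_right, Polynomial.eval_mul]
lemma poch_succ_left (x : ℝ) (k : ℕ) : poch x (k+1) = x * poch (x+1) k := by
  simp [poch, ascPochhammer_succ_left, Polynomial.eval_mul, Polynomial.eval_comp]
lemma poch_pos {x : ℝ} (hx : 0 < x) (k : ℕ) : 0 < poch x k := by
  induction k with
  | zero => simp [poch_zero]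
  | succ k ih => rw [poch_succ]; positivity
lemma poch_ne_zero {x : ℝ} (hx : ∀ k : ℕ, x + k ≠ 0) (k : ℕ) : poch x k ≠ 0 := by
  induction k with
  | zero => simp [poch_zero]
  | succ k ih => rw [poch_succ]; exact mul_ne_zero ih (hx k)
lemma abs_poch_le {x M : ℝ} (hM : 0 < M) (h : |x| ≤ M) (k : ℕ) : |poch x k| ≤ poch M k := by
  induction k with
  | zero => simp [poch_zero]
  | succ k ih =>
    rw [poch_succ, poch_succ, abs_mul]
    have h1 : |x + (k:ℝ)| ≤ M + k := by
      calc |x + (k:ℝ)| ≤ |x| + |(k:ℝ)| := abs_add_le _ _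
        _ ≤ M + k := by
          have : |(k:ℝ)| = (k:ℝ) := abs_of_nonneg (Nat.cast_nonneg k)
          linarith
    exact mul_le_mul ih h1 (abs_nonneg _) (poch_pos hM k).le
/-- poch is "superhomogeneous" in its first argument for positive args. -/
lemma poch_div_le {y z : ℝ} (hy : 0 < y) (hz : y ≤ z) (k : ℕ) (hk : k ≠ 0) :
    (z / y) * poch y k ≤ poch z k := by
  induction k with
  | zero => exact absurd rfl hk
  | succ k ih =>
    rcases Nat.eq_zero_or_pos k with h0 | hpos
    · subst h0
      have e1 : poch y 1 = y := poch_one y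
      have e2 : poch z 1 = z := poch_one z
      rw [show (0:ℕ)+1 = 1 from rfl, e1, e2, div_mul_cancel₀ _ hy.ne']
    · have hk' := ih hpos.ne'
      rw [poch_succ, poch_succ]
      have h2 : y + k ≤ z + k := by linarith
      have h3 : 0 < y + (k:ℝ) := by positivity
      calc z / y * (poch y k * (y + k)) = (z / y * poch y k) * (y + k) := by ring
        _ ≤ poch z k * (z + k) := by
          have h4 : 0 < poch z k := poch_pos (lt_of_lt_of_le hy hz) k
          exact mul_le_mul hk' h2 h3.le h4.le
lemma poch_shift (c : ℝ) (k : ℕ) : poch c k * (c + k) = c * poch (c+1) k := by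
  induction k with
  | zero => simp [poch_zero]
  | succ k ih =>
    rw [poch_succ, poch_succ]
    push_cast
    calc poch c k * (c + k) * (c + (k+1)) = (poch c k * (c+k)) * (c + k + 1) := by ring
      _ = c * poch (c+1) k * (c + 1 + k) := by rw [ih]; ring
      _ = c * (poch (c+1) k * (c + 1 + k)) := by ring
/-- Gamma functional relation for poch. -/
lemma Gamma_poch {x : ℝ} (hx : 0 < x) (k : ℕ) :
    Real.Gamma (x + k) = poch x k * Real.Gamma x := by
  induction k with
  | zero => simp [poch_zero]
  | succ k ih =>
    have h1 : x + (k:ℕ) ≠ 0 := by positivity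
    have : x + ((k:ℕ)+1:ℕ) = (x + k) + 1 := by push_cast; ring
    rw [this, Real.Gamma_add_one h1, ih, poch_succ]; ring

lemma gautschi_upper {x s : ℝ} (hx : 1 ≤ x) (hs0 : 0 ≤ s) (hs1 : s ≤ 1) :
    Real.Gamma (x + s) ≤ Real.Gamma x * x ^ s := by
  have hx0 : (0:ℝ) < x := lt_of_lt_of_le one_pos hx
  have hxs : (0:ℝ) < x + s := by linarith
  have key := Real.convexOn_log_Gamma.2 (Set.mem_Ioi.mpr hx0)
    (Set.mem_Ioi.mpr (by linarith : (0:ℝ) < x + 1)) (by linarith : (0:ℝ) ≤ 1 - s) hs0 (by ring)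
  have hcomb : (1 - s) • x + s • (x + 1) = x + s := by simp [smul_eq_mul]; ring
  rw [hcomb] at key
  simp only [Function.comp_apply, smul_eq_mul] at key
  have hG1 : Real.log (Real.Gamma (x + 1)) = Real.log x + Real.log (Real.Gamma x) := by
    rw [Real.Gamma_add_one hx0.ne', Real.log_mul hx0.ne' (Real.Gamma_pos_of_pos hx0).ne']
  have key2 : Real.log (Real.Gamma (x + s)) ≤ Real.log (Real.Gamma x) + s * Real.log x := by
    rw [hG1] at key; nlinarith [key]
  calc Real.Gamma (x + s) = Real.exp (Real.log (Real.Gamma (x + s))) :=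
        (Real.exp_log (Real.Gamma_pos_of_pos hxs)).symm
    _ ≤ Real.exp (Real.log (Real.Gamma x) + s * Real.log x) := Real.exp_le_exp.mpr key2
    _ = Real.Gamma x * x ^ s := by
        rw [Real.exp_add, Real.exp_log (Real.Gamma_pos_of_pos hx0),
          Real.rpow_def_of_pos hx0]
        ring_nf

lemma gautschi_lower {x s : ℝ} (hx : 1 ≤ x) (hs0 : 0 ≤ s) (hs1 : s ≤ 1) :
    Real.Gamma x * x ^ s ≤ 2 * Real.Gamma (x + s) := by
  have hx0 : (0:ℝ) < x := lt_of_lt_of_le one_pos hx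
  have hxs : (0:ℝ) < x + s := by linarith
  have key := Real.convexOn_log_Gamma.2 (Set.mem_Ioi.mpr hxs)
    (Set.mem_Ioi.mpr (by linarith : (0:ℝ) < x + s + 1)) hs0 (by linarith : (0:ℝ) ≤ 1 - s) (by ring)
  have hcomb : s • (x + s) + (1 - s) • (x + s + 1) = x + 1 := by simp [smul_eq_mul]; ring
  rw [hcomb] at key
  simp only [Function.comp_apply, smul_eq_mul] at key
  have hGxs : Real.log (Real.Gamma (x + s + 1)) =
      Real.log (x + s) + Real.log (Real.Gamma (x + s)) := by
    rw [Real.Gamma_add_one hxs.ne', Real.log_mul hxs.ne' (Real.Gamma_pos_of_pos hxs).ne']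
  have hG1 : Real.log (Real.Gamma (x + 1)) = Real.log x + Real.log (Real.Gamma x) := by
    rw [Real.Gamma_add_one hx0.ne', Real.log_mul hx0.ne' (Real.Gamma_pos_of_pos hx0).ne']
  rw [hGxs, hG1] at key
  -- key : log x + log Γ x ≤ s * log Γ(x+s) + (1-s) * (log (x+s) + log Γ (x+s))
  have hlogmono : Real.log x ≤ Real.log (x + s) := Real.log_le_log hx0 (by linarith)
  have hlog2 : Real.log (x + s) - Real.log x ≤ Real.log 2 := by
    rw [← Real.log_div hxs.ne' hx0.ne']
    apply Real.log_le_log (by positivity)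
    rw [div_le_iff₀ hx0]; linarith
  have key2 : Real.log (Real.Gamma x) + s * Real.log x ≤
      Real.log 2 + Real.log (Real.Gamma (x + s)) := by nlinarith [key]
  calc Real.Gamma x * x ^ s
      = Real.exp (Real.log (Real.Gamma x) + s * Real.log x) := by
        rw [Real.exp_add, Real.exp_log (Real.Gamma_pos_of_pos hx0),
          Real.rpow_def_of_pos hx0]; ring_nf
    _ ≤ Real.exp (Real.log 2 + Real.log (Real.Gamma (x + s))) := Real.exp_le_exp.mpr key2
    _ = 2 * Real.Gamma (x + s) := by
        rw [Real.exp_add, Real.exp_log two_pos, Real.exp_log (Real.Gamma_pos_of_pos hxs)]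

/-- Two-sided bound for Γ(x+θ) against Γ(x)·x^θ for large x. -/
def GQ (θ : ℝ) : Prop := ∃ C : ℝ, 0 < C ∧ ∃ K : ℝ, 1 ≤ K ∧ ∀ x : ℝ, K ≤ x →
  Real.Gamma (x + θ) ≤ C * (Real.Gamma x * x ^ θ) ∧
  Real.Gamma x * x ^ θ ≤ C * Real.Gamma (x + θ)

lemma GQ_base {s : ℝ} (hs0 : 0 ≤ s) (hs1 : s ≤ 1) : GQ s :=
  ⟨2, two_pos, 1, le_refl 1, fun x hx =>
    ⟨(gautschi_upper hx hs0 hs1).trans (by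
        nlinarith [Real.Gamma_pos_of_pos (lt_of_lt_of_le one_pos hx),
          Real.rpow_pos_of_pos (lt_of_lt_of_le one_pos hx) s]),
      gautschi_lower hx hs0 hs1⟩⟩

lemma GQ_facts {θ x : ℝ} (hxθ : 2 * |θ| + 2 ≤ x) :
    0 < x ∧ 0 < x + θ ∧ x + θ ≤ 2 * x ∧ x ≤ 2 * (x + θ) ∧ x + θ - 1 ≤ 2 * x ∧
      0 < x + θ - 1 ∧ x ≤ 2 * (x + θ - 1) := by
  have h1 : θ ≤ |θ| := le_abs_self θ
  have h2 : -|θ| ≤ θ := neg_abs_le θ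
  have h3 : 0 ≤ |θ| := abs_nonneg θ
  refine ⟨by linarith, by linarith, by linarith, by linarith, by linarith, by linarith, by linarith⟩

lemma GQ_step_up {θ : ℝ} (h : GQ θ) : GQ (θ + 1) := by
  obtain ⟨C, hC, K, hK, hb⟩ := h
  refine ⟨2 * C, by positivity, max K (2 * |θ| + 2), le_trans hK (le_max_left _ _), fun x hx => ?_⟩
  obtain ⟨hu, hl⟩ := hb x (le_trans (le_max_left _ _) hx)
  obtain ⟨hx0, hxt, hle1, hle2, -, -, -⟩ := GQ_facts (le_trans (le_max_right _ _) hx)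
  have hG : Real.Gamma (x + (θ + 1)) = (x + θ) * Real.Gamma (x + θ) := by
    rw [show x + (θ + 1) = (x + θ) + 1 by ring, Real.Gamma_add_one hxt.ne']
  have hrpow : x ^ (θ + 1) = x ^ θ * x := Real.rpow_add_one hx0.ne' θ
  have hGp : 0 < Real.Gamma x := Real.Gamma_pos_of_pos hx0
  have hGtp : 0 < Real.Gamma (x + θ) := Real.Gamma_pos_of_pos hxt
  have hrp : 0 < x ^ θ := Real.rpow_pos_of_pos hx0 θ
  constructor
  · rw [hG, hrpow]; nlinarith
  · rw [hG, hrpow]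
    nlinarith [mul_le_mul_of_nonneg_right hl hx0.le,
      mul_le_mul_of_nonneg_left hle2 (mul_pos hC hGtp).le]

lemma GQ_step_down {θ : ℝ} (h : GQ θ) : GQ (θ - 1) := by
  obtain ⟨C, hC, K, hK, hb⟩ := h
  refine ⟨2 * C, by positivity, max K (2 * |θ| + 2), le_trans hK (le_max_left _ _), fun x hx => ?_⟩
  obtain ⟨hu, hl⟩ := hb x (le_trans (le_max_left _ _) hx)
  obtain ⟨hx0, hxt, hle1, hle2, hle3, hxt1, hle4⟩ := GQ_facts (le_trans (le_max_right _ _) hx)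
  have hG : Real.Gamma (x + θ) = (x + θ - 1) * Real.Gamma (x + (θ - 1)) := by
    rw [show x + θ = (x + (θ - 1)) + 1 by ring, Real.Gamma_add_one (by linarith : x + (θ-1) ≠ 0)]
    ring_nf
  have hrpow : x ^ θ = x ^ (θ - 1) * x := by
    rw [← Real.rpow_add_one hx0.ne' (θ - 1)]; ring_nf
  have hGp : 0 < Real.Gamma x := Real.Gamma_pos_of_pos hx0
  have hGtp : 0 < Real.Gamma (x + (θ - 1)) := Real.Gamma_pos_of_pos (by linarith)
  have hrp : 0 < x ^ (θ - 1) := Real.rpow_pos_of_pos hx0 (θ - 1)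
  rw [hG, hrpow] at hu hl
  constructor
  · nlinarith [mul_le_mul_of_nonneg_right hle4 hGtp.le, hu,
      mul_pos (mul_pos hC hGp) hrp, hx0]
  · nlinarith [mul_le_mul_of_nonneg_left hle3 (mul_pos hC hGtp).le, hl,
      mul_pos hGp hrp, hx0]

lemma GQ_all (θ : ℝ) : GQ θ := by
  have hup : ∀ n : ℕ, ∀ t : ℝ, GQ t → GQ (t + n) := by
    intro n
    induction n with
    | zero => intro t h; simpa using h
    | succ n ih =>
      intro t h
      have h2 := GQ_step_up (ih t h)
      have e : t + ((n+1 : ℕ) : ℝ) = (t + n) + 1 := by push_cast; ring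
      rw [e]; exact h2
  have hdown : ∀ n : ℕ, ∀ t : ℝ, GQ t → GQ (t - n) := by
    intro n
    induction n with
    | zero => intro t h; simpa using h
    | succ n ih =>
      intro t h
      have h2 := GQ_step_down (ih t h)
      have e : t - ((n+1 : ℕ) : ℝ) = (t - n) - 1 := by push_cast; ring
      rw [e]; exact h2
  have hfr : GQ (Int.fract θ) := GQ_base (Int.fract_nonneg θ) (Int.fract_lt_one θ).le
  have hsplit : θ = Int.fract θ + ⌊θ⌋ := by rw [add_comm]; exact (Int.floor_add_fract θ).symm
  rcases le_or_gt 0 (⌊θ⌋ : ℤ) with hpos | hneg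
  · have e : ((⌊θ⌋.toNat : ℕ) : ℝ) = ((⌊θ⌋ : ℤ) : ℝ) := by
      exact_mod_cast Int.toNat_of_nonneg hpos
    have h2 := hup ⌊θ⌋.toNat _ hfr
    rw [e] at h2
    rwa [hsplit]
  · have e : (((-⌊θ⌋).toNat : ℕ) : ℝ) = -((⌊θ⌋ : ℤ) : ℝ) := by
      have h3 : ((-⌊θ⌋).toNat : ℤ) = -⌊θ⌋ := Int.toNat_of_nonneg (by omega)
      exact_mod_cast h3
    have h2 := hdown (-⌊θ⌋).toNat _ hfr
    rw [e, sub_neg_eq_add] at h2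
    rwa [hsplit]

lemma poch_add (x : ℝ) (n m : ℕ) : poch x (n + m) = poch x n * poch (x + n) m := by
  induction m with
  | zero => simp [poch_zero]
  | succ m ih =>
    have e : n + (m + 1) = (n + m) + 1 := by ring
    rw [e, poch_succ, ih, poch_succ]
    push_cast; ring

lemma poch_one_factorial (k : ℕ) : poch 1 k = k.factorial := by
  induction k with
  | zero => simp [poch_zero]
  | succ k ih => rw [poch_succ, ih, Nat.factorial_succ]; push_cast; ring

noncomputable def hterm (a b c : ℝ) (k : ℕ) : ℝ :=
  poch a k * poch b k / (poch c k * k.factorial)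

lemma hterm_zero (a b c : ℝ) : hterm a b c 0 = 1 := by simp [hterm, poch_zero]

lemma hterm_bound' (a b c : ℝ) (hcz : ∀ k : ℕ, c + k ≠ 0) :
    ∃ C : ℝ, 0 < C ∧ ∃ K : ℕ, 0 < K ∧ ∀ k : ℕ, (K:ℝ) ≤ k →
    |hterm a b c k| ≤ C * (k:ℝ) ^ (a + b - c - 1) := by
  obtain ⟨Ca, hCa, Ka, hKa, hba⟩ := GQ_all a
  obtain ⟨Cb, hCb, Kb, hKb, hbb⟩ := GQ_all b
  obtain ⟨Cc, hCc, Kc, hKc, hbc⟩ := GQ_all c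
  obtain ⟨C1, hC1, K1, hK1, hb1⟩ := GQ_all 1
  obtain ⟨K₁, hK₁⟩ := exists_nat_ge (Ka + Kb + Kc + K1 + (|a| + |b| + |c| + 1))
  have habs : |a| + |b| + |c| + 1 ≤ (K₁:ℝ) := by
    have := abs_nonneg a; have := abs_nonneg b; have := abs_nonneg c; linarith
  have haK : (0:ℝ) < a + K₁ := by
    have := abs_nonneg b; have := abs_nonneg c; have := neg_abs_le a; linarith
  have hbK : (0:ℝ) < b + K₁ := by
    have := abs_nonneg a; have := abs_nonneg c; have := neg_abs_le b; linarith
  have hcK : (0:ℝ) < c + K₁ := by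
    have := abs_nonneg a; have := abs_nonneg b; have := neg_abs_le c; linarith
  have h1K : (0:ℝ) < 1 + K₁ := by positivity
  set Q : ℝ := (|poch a K₁| * |poch b K₁| * Real.Gamma (c + K₁) * Real.Gamma (1 + K₁)) /
    (Real.Gamma (a + K₁) * Real.Gamma (b + K₁) * |poch c K₁| * K₁.factorial) with hQ
  have hQ0 : 0 ≤ Q := by
    apply div_nonneg
    · have := (Real.Gamma_pos_of_pos hcK).le
      have := (Real.Gamma_pos_of_pos h1K).le
      positivity
    · have := (Real.Gamma_pos_of_pos haK).le
      have := (Real.Gamma_pos_of_pos hbK).le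
      positivity
  have habs0 : (0:ℝ) ≤ |a| + |b| + |c| := by positivity
  have hCQ : 0 < Q * (Ca * Cb * Cc * C1) + 1 := by
    have : 0 ≤ Q * (Ca * Cb * Cc * C1) := mul_nonneg hQ0 (by positivity)
    linarith
  refine ⟨Q * (Ca * Cb * Cc * C1) + 1, hCQ, K₁ + 1, by omega, fun k hk => ?_⟩
  -- basic positivity about x = (k:ℝ)
  set x : ℝ := (k:ℝ) with hx
  have hxK₁ : (K₁:ℝ) + 1 ≤ x := by exact_mod_cast hk
  have hx0 : (0:ℝ) < x := by linarith [(Nat.cast_nonneg K₁ : (0:ℝ) ≤ (K₁:ℝ))]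
  have hkK₁ : K₁ ≤ k := by
    have : (K₁:ℝ) ≤ (k:ℝ) := by linarith
    exact_mod_cast this
  obtain ⟨j, hj⟩ : ∃ j : ℕ, k = K₁ + j := ⟨k - K₁, by omega⟩
  -- Gamma representations
  have harg : ∀ t : ℝ, t + (K₁:ℝ) + (j:ℝ) = x + t := by
    intro t; rw [hx, hj]; push_cast; ring
  have ga : Real.Gamma (x + a) = poch (a + K₁) j * Real.Gamma (a + K₁) := by
    rw [← harg a]; exact Gamma_poch haK j
  have gb : Real.Gamma (x + b) = poch (b + K₁) j * Real.Gamma (b + K₁) := by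
    rw [← harg b]; exact Gamma_poch hbK j
  have gc : Real.Gamma (x + c) = poch (c + K₁) j * Real.Gamma (c + K₁) := by
    rw [← harg c]; exact Gamma_poch hcK j
  have gf : Real.Gamma (x + 1) = poch (1 + K₁) j * Real.Gamma (1 + K₁) := by
    rw [← harg 1]; exact Gamma_poch h1K j
  -- split poch
  have pa : poch a k = poch a K₁ * poch (a + K₁) j := by rw [hj, poch_add]
  have pb : poch b k = poch b K₁ * poch (b + K₁) j := by rw [hj, poch_add]
  have pc : poch c k = poch c K₁ * poch (c + K₁) j := by rw [hj, poch_add]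
  have pf : (k.factorial : ℝ) = (K₁.factorial : ℝ) * poch (1 + K₁) j := by
    rw [← poch_one_factorial, hj, poch_add, poch_one_factorial]
  have hpa : 0 < poch (a + K₁) j := poch_pos haK j
  have hpb : 0 < poch (b + K₁) j := poch_pos hbK j
  have hpc : 0 < poch (c + K₁) j := poch_pos hcK j
  have hpf : 0 < poch (1 + K₁) j := poch_pos h1K j
  have hpcK : poch c K₁ ≠ 0 := poch_ne_zero hcz K₁
  have hfK : (0:ℝ) < K₁.factorial := by exact_mod_cast K₁.factorial_pos
  -- the exact Gamma form of |hterm|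
  have aa : |poch a k| = |poch a K₁| * poch (a + K₁) j := by
    rw [pa, abs_mul, abs_of_pos hpa]
  have ab : |poch b k| = |poch b K₁| * poch (b + K₁) j := by
    rw [pb, abs_mul, abs_of_pos hpb]
  have ac : |poch c k| = |poch c K₁| * poch (c + K₁) j := by
    rw [pc, abs_mul, abs_of_pos hpc]
  have af : |(k.factorial : ℝ)| = (K₁.factorial : ℝ) * poch (1 + K₁) j := by
    rw [pf, abs_mul, abs_of_pos hpf, abs_of_pos hfK]
  have key : |hterm a b c k| =
      Q * (Real.Gamma (x + a) * Real.Gamma (x + b) /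
        (Real.Gamma (x + c) * Real.Gamma (x + 1))) := by
    rw [hterm, abs_div, abs_mul, abs_mul, aa, ab, ac, af, ga, gb, gc, gf, hQ]
    have g1 := (Real.Gamma_pos_of_pos haK).ne'
    have g2 := (Real.Gamma_pos_of_pos hbK).ne'
    have g3 := (Real.Gamma_pos_of_pos hcK).ne'
    have g4 := (Real.Gamma_pos_of_pos h1K).ne'
    have h5 : |poch c K₁| ≠ 0 := abs_ne_zero.mpr hpcK
    generalize |poch a K₁| = A at *
    generalize |poch b K₁| = B at *
    generalize |poch c K₁| = Cq at *
    generalize Real.Gamma (a + (K₁:ℝ)) = GA at *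
    generalize Real.Gamma (b + (K₁:ℝ)) = GB at *
    generalize Real.Gamma (c + (K₁:ℝ)) = GC at *
    generalize Real.Gamma (1 + (K₁:ℝ)) = GF at *
    generalize ((K₁.factorial : ℕ) : ℝ) = FK at *
    generalize poch (a + (K₁:ℝ)) j = PA at *
    generalize poch (b + (K₁:ℝ)) j = PB at *
    generalize poch (c + (K₁:ℝ)) j = PC at *
    generalize poch (1 + (K₁:ℝ)) j = PF at *
    field_simp
  rw [key]
  -- now the GQ bounds at x
  have hxa : Ka ≤ x := by linarith
  have hxb : Kb ≤ x := by linarith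
  have hxc : Kc ≤ x := by linarith
  have hx1 : K1 ≤ x := by linarith
  obtain ⟨bua, -⟩ := hba x hxa
  obtain ⟨bub, -⟩ := hbb x hxb
  obtain ⟨-, blc⟩ := hbc x hxc
  obtain ⟨-, bl1⟩ := hb1 x hx1
  have hGx : 0 < Real.Gamma x := Real.Gamma_pos_of_pos hx0
  have hgxc : 0 < Real.Gamma (x + c) := Real.Gamma_pos_of_pos (by linarith [neg_abs_le c])
  have hgx1 : 0 < Real.Gamma (x + 1) := Real.Gamma_pos_of_pos (by linarith)
  have hrc : 0 < x ^ c := Real.rpow_pos_of_pos hx0 c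
  have hra : 0 < x ^ a := Real.rpow_pos_of_pos hx0 a
  have hrb : 0 < x ^ b := Real.rpow_pos_of_pos hx0 b
  have hr1 : 0 < x ^ (1:ℝ) := Real.rpow_pos_of_pos hx0 1
  have hnum : Real.Gamma (x + a) * Real.Gamma (x + b) ≤
      Ca * Cb * (Real.Gamma x * Real.Gamma x * (x ^ a * x ^ b)) := by
    have h1 : Real.Gamma (x+a) ≤ Ca * (Real.Gamma x * x ^ a) := bua
    have h2 : Real.Gamma (x+b) ≤ Cb * (Real.Gamma x * x ^ b) := bub
    have h3 : 0 ≤ Real.Gamma (x + a) := Real.Gamma_nonneg_of_nonneg (by linarith [neg_abs_le a])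
    calc Real.Gamma (x + a) * Real.Gamma (x + b)
        ≤ (Ca * (Real.Gamma x * x ^ a)) * (Cb * (Real.Gamma x * x ^ b)) :=
          mul_le_mul h1 h2 (Real.Gamma_nonneg_of_nonneg (by linarith [neg_abs_le b])) (by positivity)
      _ = Ca * Cb * (Real.Gamma x * Real.Gamma x * (x ^ a * x ^ b)) := by ring
  have hden : (Cc * C1)⁻¹ * (Real.Gamma x * Real.Gamma x * (x ^ c * x ^ (1:ℝ))) ≤
      Real.Gamma (x + c) * Real.Gamma (x + 1) := by
    have h1 : Real.Gamma x * x ^ c ≤ Cc * Real.Gamma (x + c) := blc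
    have h2 : Real.Gamma x * x ^ (1:ℝ) ≤ C1 * Real.Gamma (x + 1) := bl1
    have h3 := mul_le_mul h1 h2 (by positivity) (by positivity)
    rw [inv_mul_le_iff₀ (by positivity)]
    calc Real.Gamma x * Real.Gamma x * (x ^ c * x ^ (1:ℝ))
        = (Real.Gamma x * x ^ c) * (Real.Gamma x * x ^ (1:ℝ)) := by ring
      _ ≤ (Cc * Real.Gamma (x + c)) * (C1 * Real.Gamma (x + 1)) := h3
      _ = Cc * C1 * (Real.Gamma (x + c) * Real.Gamma (x + 1)) := by ring
  have hratio : Real.Gamma (x + a) * Real.Gamma (x + b) /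
      (Real.Gamma (x + c) * Real.Gamma (x + 1)) ≤
      (Ca * Cb * (Real.Gamma x * Real.Gamma x * (x ^ a * x ^ b))) /
      ((Cc * C1)⁻¹ * (Real.Gamma x * Real.Gamma x * (x ^ c * x ^ (1:ℝ)))) := by
    apply div_le_div₀ (by positivity) hnum (by positivity) hden
  have h2 : x ^ (a+b-c-1) * (x ^ c * x ^ (1:ℝ)) = x ^ a * x ^ b := by
    rw [Real.rpow_one, ← Real.rpow_add_one hx0.ne' c, ← Real.rpow_add hx0, ← Real.rpow_add hx0]
    ring_nf
  have hsimp : (Ca * Cb * (Real.Gamma x * Real.Gamma x * (x ^ a * x ^ b))) /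
      ((Cc * C1)⁻¹ * (Real.Gamma x * Real.Gamma x * (x ^ c * x ^ (1:ℝ)))) =
      Ca * Cb * Cc * C1 * x ^ (a + b - c - 1) := by
    rw [div_eq_iff (by positivity)]
    generalize hE : x ^ (a+b-c-1) = E at *
    generalize Real.Gamma x = G at *
    generalize x ^ a = XA at *
    generalize x ^ b = XB at *
    generalize x ^ c = XC at *
    generalize x ^ (1:ℝ) = X1 at *
    have hinv : (Cc * C1) * (Cc * C1)⁻¹ = 1 := mul_inv_cancel₀ (by positivity)
    linear_combination (-(Ca * Cb * G * G)) * h2 - (Ca * Cb * E * G * G * XC * X1) * hinv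
  rw [hsimp] at hratio
  calc Q * (Real.Gamma (x + a) * Real.Gamma (x + b) /
        (Real.Gamma (x + c) * Real.Gamma (x + 1)))
      ≤ Q * (Ca * Cb * Cc * C1 * x ^ (a + b - c - 1)) := by
        apply mul_le_mul_of_nonneg_left hratio hQ0
    _ = (Q * (Ca * Cb * Cc * C1)) * x ^ (a + b - c - 1) := by ring
    _ ≤ (Q * (Ca * Cb * Cc * C1) + 1) * x ^ (a + b - c - 1) := by
        have hE : 0 < x ^ (a + b - c - 1) := Real.rpow_pos_of_pos hx0 _
        exact mul_le_mul_of_nonneg_right (by linarith) hE.le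

lemma summable_of_rpow_bound {f : ℕ → ℝ} {C p : ℝ} (hp : p < -1) (K : ℕ)
    (h : ∀ k : ℕ, (K:ℝ) ≤ k → |f k| ≤ C * (k:ℝ) ^ p) : Summable f := by
  rw [← summable_nat_add_iff K]
  apply Summable.of_abs
  have hmaj : Summable (fun n : ℕ => C * ((n + K : ℕ):ℝ) ^ p) :=
    Summable.mul_left C ((summable_nat_add_iff K).2 (Real.summable_nat_rpow.2 hp))
  refine Summable.of_nonneg_of_le (fun n => abs_nonneg _) (fun n => ?_) hmaj
  apply h
  push_cast
  linarith [(Nat.cast_nonneg n : (0:ℝ) ≤ n)]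

lemma summable_hterm (a b c : ℝ) (hcz : ∀ k : ℕ, c + k ≠ 0) (h : a + b < c) :
    Summable (hterm a b c) := by
  obtain ⟨C, hC, K, hK, hb⟩ := hterm_bound' a b c hcz
  exact summable_of_rpow_bound (by linarith) K hb

lemma summable_mul_hterm (a b c : ℝ) (hcz : ∀ k : ℕ, c + k ≠ 0) (h : a + b + 1 < c) :
    Summable (fun k : ℕ => (k:ℝ) * hterm a b c k) := by
  obtain ⟨C, hC, K, hK, hb⟩ := hterm_bound' a b c hcz
  apply summable_of_rpow_bound (p := a + b - c) (by linarith) (K + 1)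
  intro k hk
  have hk1 : (1:ℝ) ≤ (k:ℝ) := by
    have : ((K:ℝ) + 1) ≤ k := by push_cast at hk ⊢; linarith
    linarith [(Nat.cast_nonneg K : (0:ℝ) ≤ K)]
  have hk0 : (0:ℝ) < (k:ℝ) := by linarith
  have hb' := hb k (by push_cast at hk ⊢; linarith)
  rw [abs_mul, abs_of_nonneg hk0.le]
  calc (k:ℝ) * |hterm a b c k| ≤ (k:ℝ) * (C * (k:ℝ) ^ (a+b-c-1)) := by
        exact mul_le_mul_of_nonneg_left hb' hk0.le
    _ = C * (k:ℝ) ^ (a+b-c) := by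
        rw [show a+b-c = (a+b-c-1) + 1 by ring, Real.rpow_add_one hk0.ne']
        ring

/-- The value of the telescoped series. -/
lemma telescope_zero (a b c : ℝ) (hcz : ∀ k : ℕ, c + k ≠ 0) (h : a + b < c) :
    ∑' k : ℕ, ((c - a - b) * k - a * b) * hterm a b (c+1) k = 0 := by
  set v : ℕ → ℝ := hterm a b (c+1) with hv
  have hcz1 : ∀ k : ℕ, (c+1) + (k:ℝ) ≠ 0 := by
    intro k
    have h5 := hcz (k+1)
    push_cast at h5 ⊢
    intro heq; apply h5; linarith
  have sumv : Summable v := summable_hterm a b (c+1) hcz1 (by linarith)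
  have sumkv : Summable (fun k : ℕ => (k:ℝ) * v k) :=
    summable_mul_hterm a b (c+1) hcz1 (by linarith)
  set g : ℕ → ℝ := fun k => (k:ℝ) * (c + k) * v k with hg
  have gstep : ∀ k : ℕ, g (k+1) = (a+k) * (b+k) * v k := by
    intro k
    have hp1 : poch (c+1) k ≠ 0 := poch_ne_zero hcz1 k
    have hp2 : (c+1) + (k:ℝ) ≠ 0 := hcz1 k
    have hp3 : (k.factorial : ℝ) ≠ 0 := by exact_mod_cast k.factorial_pos.ne'
    simp only [hg, hv, hterm, poch_succ, Nat.factorial_succ]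
    push_cast
    field_simp
    ring
  have hfun : ∀ k : ℕ, g k - g (k+1) = ((c - a - b) * k - a * b) * v k := by
    intro k
    rw [gstep k, hg]
    simp only
    ring
  have sums : Summable (fun k : ℕ => ((c - a - b) * k - a * b) * v k) := by
    apply Summable.congr ((sumkv.mul_left (c-a-b)).sub (sumv.mul_left (a*b)))
    intro k; ring
  -- limit of g
  have glim : Tendsto g atTop (𝓝 0) := by
    obtain ⟨C, hC, K, hK, hb⟩ := hterm_bound' a b (c+1) hcz1
    obtain ⟨K₂, hK₂⟩ := exists_nat_ge ((K:ℝ) + |c| + 1)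
    have hbd : ∀ᶠ (k:ℕ) in atTop, ‖g k‖ ≤ (2*C) * (k:ℝ) ^ (a + b - c) := by
      rw [eventually_atTop]
      refine ⟨K₂, fun k hk => ?_⟩
      have hkr : (K:ℝ) + |c| + 1 ≤ (k:ℝ) := le_trans hK₂ (by exact_mod_cast hk)
      have habs : (0:ℝ) ≤ |c| := abs_nonneg c
      have hk0 : (0:ℝ) < (k:ℝ) := by linarith [(Nat.cast_nonneg K : (0:ℝ) ≤ K)]
      have hb' := hb k (by linarith)
      have hcb : |c + (k:ℝ)| ≤ 2 * (k:ℝ) := by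
        rw [abs_le]
        constructor
        · linarith [neg_abs_le c, (Nat.cast_nonneg K : (0:ℝ) ≤ K)]
        · linarith [le_abs_self c, (Nat.cast_nonneg K : (0:ℝ) ≤ K)]
      have e1 : (2*C) * (k:ℝ) ^ (a+b-c) = (k:ℝ) * (2 * (k:ℝ)) * (C * (k:ℝ) ^ (a+b-(c+1)-1)) := by
        rw [show a+b-c = (a+b-(c+1)-1) + 1 + 1 by ring, Real.rpow_add_one (by positivity),
          Real.rpow_add_one (by positivity)]
        ring
      have hnorm : ‖g k‖ = (k:ℝ) * |c + (k:ℝ)| * |v k| := by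
        rw [hg]; simp only [norm_eq_abs, abs_mul, Nat.abs_cast]
      rw [hnorm, e1]
      apply mul_le_mul (by nlinarith) hb' (abs_nonneg _) (by positivity)
    have hlim : Tendsto (fun k : ℕ => (2*C) * (k:ℝ) ^ (a+b-c)) atTop (𝓝 0) := by
      have h7 : Tendsto (fun x : ℝ => (2*C) * x ^ (a+b-c)) atTop (𝓝 ((2*C) * 0)) := by
        apply Tendsto.const_mul
        have := tendsto_rpow_neg_atTop (y := -(a+b-c)) (by linarith)
        simpa using this
      rw [mul_zero] at h7
      exact h7.comp tendsto_natCast_atTop_atTop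
    exact squeeze_zero_norm' hbd hlim
  -- put it together
  have hpart : Tendsto (fun n => ∑ i ∈ Finset.range n, (g i - g (i+1))) atTop (𝓝 0) := by
    have : ∀ n : ℕ, ∑ i ∈ Finset.range n, (g i - g (i+1)) = g 0 - g n := fun n =>
      Finset.sum_range_sub' g n
    rw [funext this]
    have hg0 : g 0 = 0 := by simp [hg]
    rw [hg0]
    simpa using glim.const_sub 0
  have hs := sums.hasSum.tendsto_sum_nat
  have heq : (fun n => ∑ i ∈ Finset.range n, ((c - a - b) * i - a * b) * v i) =
      fun n => ∑ i ∈ Finset.range n, (g i - g (i+1)) := by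
    funext n; exact Finset.sum_congr rfl (fun i _ => (hfun i).symm)
  rw [heq] at hs
  exact tendsto_nhds_unique hs hpart

/-- Gauss's contiguous recursion in `c` at argument 1. -/
lemma contiguous (a b c : ℝ) (hcz : ∀ k : ℕ, c + k ≠ 0) (h : a + b < c) :
    ∑' k : ℕ, hterm a b c k =
      ((c-a) * (c-b) / (c * (c-a-b))) * ∑' k : ℕ, hterm a b (c+1) k := by
  set v : ℕ → ℝ := hterm a b (c+1) with hv
  have hcz1 : ∀ k : ℕ, (c+1) + (k:ℝ) ≠ 0 := by
    intro k
    have h5 := hcz (k+1)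
    push_cast at h5 ⊢
    intro heq; apply h5; linarith
  have hc0 : c ≠ 0 := by have := hcz 0; push_cast at this; simpa using this
  have hcab : c - a - b ≠ 0 := by intro h6; rw [sub_eq_zero] at h6; linarith [h6]
  have sumv : Summable v := summable_hterm a b (c+1) hcz1 (by linarith)
  have sumkv : Summable (fun k : ℕ => (k:ℝ) * v k) :=
    summable_mul_hterm a b (c+1) hcz1 (by linarith)
  have huv : ∀ k : ℕ, hterm a b c k = v k + (1/c) * ((k:ℝ) * v k) := by
    intro k
    have hps := poch_shift c k
    have hp1 : poch (c+1) k ≠ 0 := poch_ne_zero hcz1 k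
    have hp2 : poch c k ≠ 0 := poch_ne_zero hcz k
    have hp3 : (k.factorial : ℝ) ≠ 0 := by exact_mod_cast k.factorial_pos.ne'
    have h8 : c * hterm a b c k = (c + (k:ℝ)) * v k := by
      rw [hv, hterm, hterm]
      field_simp
      linear_combination (-(poch a k * poch b k)) * hps
    have h9 : v k + (1/c) * ((k:ℝ) * v k) = (c + (k:ℝ)) * v k / c := by
      field_simp
    rw [h9, eq_div_iff hc0]
    linear_combination h8
  have hkey := telescope_zero a b c hcz h
  have hsplit : ∑' k : ℕ, ((c - a - b) * k - a * b) * v k =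
      (c-a-b) * (∑' k : ℕ, (k:ℝ) * v k) - (a*b) * ∑' k : ℕ, v k := by
    rw [← tsum_mul_left, ← tsum_mul_left, ← Summable.tsum_sub (sumkv.mul_left _) (sumv.mul_left _)]
    apply tsum_congr; intro k; ring
  rw [hsplit] at hkey
  have hkv : ∑' k : ℕ, (k:ℝ) * v k = (a*b/(c-a-b)) * ∑' k : ℕ, v k := by
    field_simp
    linear_combination hkey
  calc ∑' k : ℕ, hterm a b c k = ∑' k : ℕ, (v k + (1/c) * ((k:ℝ) * v k)) := tsum_congr huv
    _ = (∑' k : ℕ, v k) + (1/c) * ∑' k : ℕ, (k:ℝ) * v k := by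
        rw [Summable.tsum_add sumv (sumkv.mul_left _), tsum_mul_left]
    _ = (∑' k : ℕ, v k) + (1/c) * ((a*b/(c-a-b)) * ∑' k : ℕ, v k) := by rw [hkv]
    _ = ((c-a) * (c-b) / (c * (c-a-b))) * ∑' k : ℕ, v k := by
        field_simp
        ring

lemma poch_prod (x : ℝ) (k : ℕ) : poch x k = ∏ j ∈ Finset.range k, (x + j) := by
  induction k with
  | zero => simp [poch_zero]
  | succ k ih => rw [poch_succ, ih, Finset.prod_range_succ]

theorem gauss_sum (a b c : ℝ) (h : a + b < c)
    (hcz : ∀ k : ℕ, c + (k:ℝ) ≠ 0) (hca : ∀ k : ℕ, c - a + (k:ℝ) ≠ 0)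
    (hcb : ∀ k : ℕ, c - b + (k:ℝ) ≠ 0) :
    ∑' k : ℕ, hterm a b c k =
      Real.Gamma c * Real.Gamma (c-a-b) / (Real.Gamma (c-a) * Real.Gamma (c-b)) := by
  have hd : 0 < c - a - b := by linarith
  set S : ℕ → ℝ := fun n => ∑' k : ℕ, hterm a b (c + n) k with hS
  set P : ℕ → ℝ := fun n =>
    poch (c-a) n * poch (c-b) n / (poch c n * poch (c-a-b) n) with hP
  have hczn : ∀ n : ℕ, ∀ k : ℕ, (c + n) + (k:ℝ) ≠ 0 := by
    intro n k
    have := hcz (n + k)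
    push_cast at this ⊢
    intro heq; apply this; linarith
  have hsum : ∀ n : ℕ, Summable (hterm a b (c + n)) := fun n =>
    summable_hterm a b (c+n) (hczn n) (by linarith [(Nat.cast_nonneg n : (0:ℝ) ≤ n)])
  -- Step 1 : iteration
  have iterate : ∀ n : ℕ, S 0 = P n * S n := by
    intro n
    induction n with
    | zero => simp [hP, poch_zero]
    | succ n ih =>
      have hrec := contiguous a b (c + n) (hczn n)
        (by linarith [(Nat.cast_nonneg n : (0:ℝ) ≤ n)])
      have hcast : hterm a b (c + (n:ℝ) + 1) = hterm a b (c + ((n+1 : ℕ):ℝ)) := by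
        congr 1
        push_cast
        ring
      rw [hcast] at hrec
      have hstep : S n = ((c + n - a) * (c + n - b) / ((c + n) * (c + n - a - b))) * S (n+1) := by
        rw [hS]; simp only; exact hrec
      rw [ih, hstep]
      have hfactor : P n * ((c + n - a) * (c + n - b) / ((c + n) * (c + n - a - b))) = P (n+1) := by
        rw [hP]
        simp only
        rw [poch_succ, poch_succ, poch_succ, poch_succ]
        have h1 : poch c n ≠ 0 := poch_ne_zero (fun k => by
          have := hcz k; push_cast at this ⊢; exact this) n
        have h2 : poch (c-a-b) n ≠ 0 := (poch_pos hd n).ne'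
        have h3 : c + (n:ℝ) ≠ 0 := by have := hcz n; push_cast at this ⊢; exact this
        have h4 : c + (n:ℝ) - a - b ≠ 0 := by
          have : (0:ℝ) ≤ n := Nat.cast_nonneg n
          intro heq; nlinarith
        have h5 : c - a - b + (n:ℝ) ≠ 0 := by intro heq; apply h4; linarith
        field_simp
        ring
      rw [← hfactor]
      ring
  -- Step 2 : S n → 1
  have hSlim : Tendsto S atTop (𝓝 1) := by
    set M : ℝ := max (max |a| |b|) 1 with hM
    have hM1 : (1:ℝ) ≤ M := le_max_right _ _
    have hM0 : (0:ℝ) < M := by linarith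
    have hMa : |a| ≤ M := le_trans (le_max_left _ _) (le_max_left _ _)
    have hMb : |b| ≤ M := le_trans (le_max_right _ _) (le_max_left _ _)
    obtain ⟨n₀, hn₀⟩ := exists_nat_ge (2*M + 2 - c)
    have hcn₀ : 2*M + 2 ≤ c + n₀ := by linarith
    have hcn₀pos : (0:ℝ) < c + n₀ := by linarith
    have hw : Summable (hterm M M (c + n₀)) :=
      summable_hterm M M (c+n₀) (hczn n₀) (by linarith)
    set T : ℝ := ∑' k : ℕ, hterm M M (c + n₀) (k+1) with hT
    have hwpos : ∀ k : ℕ, 0 ≤ hterm M M (c+n₀) k := by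
      intro k
      rw [hterm]
      have := poch_pos hM0 k
      have := poch_pos hcn₀pos k
      have : (0:ℝ) < k.factorial := by exact_mod_cast k.factorial_pos
      positivity
    have hT0 : 0 ≤ T := tsum_nonneg (fun k => hwpos (k+1))
    -- pointwise comparison for n ≥ n₀
    have hcomp : ∀ n : ℕ, n₀ ≤ n → ∀ k : ℕ,
        |hterm a b (c+n) (k+1)| ≤ ((c+n₀)/(c+n)) * hterm M M (c+n₀) (k+1) := by
      intro n hn k
      have hcnn : (c + n₀ : ℝ) ≤ c + n := by
        have : (n₀:ℝ) ≤ n := by exact_mod_cast hn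
        linarith
      have hcnpos : (0:ℝ) < c + n := by linarith
      have hpz : 0 < poch (c+n₀) (k+1) := poch_pos hcn₀pos (k+1)
      have hpz2 : 0 < poch (c+n) (k+1) := poch_pos hcnpos (k+1)
      have hfz : (0:ℝ) < (k+1).factorial := by exact_mod_cast (k+1).factorial_pos
      have hmono : ((c+n)/(c+n₀)) * poch (c+n₀) (k+1) ≤ poch (c+n) (k+1) :=
        poch_div_le hcn₀pos hcnn (k+1) (Nat.succ_ne_zero k)
      have hnum : |poch a (k+1) * poch b (k+1)| ≤ poch M (k+1) * poch M (k+1) := by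
        rw [abs_mul]
        exact mul_le_mul (abs_poch_le hM0 hMa _) (abs_poch_le hM0 hMb _)
          (abs_nonneg _) (poch_pos hM0 _).le
      have hpos2 : (0:ℝ) < poch (c+(n:ℝ)) (k+1) * ((k+1).factorial:ℝ) := mul_pos hpz2 hfz
      rw [hterm, hterm, abs_div, abs_of_pos hpos2, div_le_iff₀ hpos2]
      have hne2 : poch (c+(n:ℝ)) (k+1) ≠ 0 := hpz2.ne'
      have hne3 : poch (c+(n₀:ℝ)) (k+1) ≠ 0 := hpz.ne'
      have hne4 : ((k+1).factorial:ℝ) ≠ 0 := hfz.ne'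
      have hne5 : c + (n:ℝ) ≠ 0 := hcnpos.ne'
      have hne6 : c + (n₀:ℝ) ≠ 0 := hcn₀pos.ne'
      have e1 : ((c+n₀)/(c+n)) * (poch M (k+1) * poch M (k+1) /
          (poch (c+n₀) (k+1) * (k+1).factorial)) * (poch (c+n) (k+1) * (k+1).factorial) =
          (poch M (k+1) * poch M (k+1)) * (poch (c+n) (k+1) / (((c+n)/(c+n₀)) * poch (c+n₀) (k+1))) := by
        field_simp
      rw [e1]
      calc |poch a (k+1) * poch b (k+1)| ≤ poch M (k+1) * poch M (k+1) := hnum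
        _ ≤ (poch M (k+1) * poch M (k+1)) *
            (poch (c+n) (k+1) / (((c+n)/(c+n₀)) * poch (c+n₀) (k+1))) := by
          apply le_mul_of_one_le_right
            (mul_nonneg (poch_pos hM0 _).le (poch_pos hM0 _).le)
          rw [le_div_iff₀ (mul_pos (div_pos hcnpos hcn₀pos) hpz)]
          linarith [hmono]
    -- tail bound
    have htail : ∀ n : ℕ, n₀ ≤ n → ‖S n - 1‖ ≤ ((c+n₀)/(c+n)) * T := by
      intro n hn
      have hsummn := hsum n
      have hzero : S n = 1 + ∑' k : ℕ, hterm a b (c+n) (k+1) := by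
        rw [hS]
        simp only
        rw [Summable.tsum_eq_zero_add hsummn, hterm_zero]
      have htsum : ‖∑' k : ℕ, hterm a b (c+n) (k+1)‖ ≤ ((c+n₀)/(c+n)) * T := by
        rw [hT, ← tsum_mul_left]
        apply tsum_of_norm_bounded
        · exact Summable.hasSum (by
            apply Summable.mul_left
            exact (summable_nat_add_iff 1).2 hw)
        · intro k
          exact hcomp n hn k
      rw [hzero]
      simpa using htsum
    have hlim0 : Tendsto (fun n : ℕ => ((c+n₀)/(c+n)) * T) atTop (𝓝 0) := by
      have h1 : Tendsto (fun n : ℕ => (c + (n:ℝ))) atTop atTop :=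
        tendsto_atTop_add_const_left _ c tendsto_natCast_atTop_atTop
      have h2 : Tendsto (fun n : ℕ => (c + (n:ℝ))⁻¹) atTop (𝓝 0) := h1.inv_tendsto_atTop
      have h3 := h2.const_mul (c+(n₀:ℝ))
      rw [mul_zero] at h3
      have h4 := h3.mul_const T
      rw [zero_mul] at h4
      apply h4.congr
      intro n; field_simp
    have : Tendsto (fun n => S n - 1) atTop (𝓝 0) := by
      apply squeeze_zero_norm' _ hlim0
      rw [eventually_atTop]
      exact ⟨n₀, htail⟩
    have h5 := this.add (tendsto_const_nhds (x := (1:ℝ)))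
    rw [zero_add] at h5
    apply h5.congr
    intro n; ring
  -- Step 3 : P n → Gamma ratio
  have hnz_ca : Real.Gamma (c - a) ≠ 0 := by
    apply Real.Gamma_ne_zero
    intro m heq
    have := hca m
    rw [heq] at this
    simp at this
  have hnz_cb : Real.Gamma (c - b) ≠ 0 := by
    apply Real.Gamma_ne_zero
    intro m heq
    have := hcb m
    rw [heq] at this
    simp at this
  have hPlim : Tendsto P atTop
      (𝓝 (Real.Gamma c * Real.Gamma (c-a-b) / (Real.Gamma (c-a) * Real.Gamma (c-b)))) := by
    have hGSlim : Tendsto (fun n : ℕ =>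
        Real.GammaSeq c n * Real.GammaSeq (c-a-b) n /
          (Real.GammaSeq (c-a) n * Real.GammaSeq (c-b) n)) atTop
        (𝓝 (Real.Gamma c * Real.Gamma (c-a-b) / (Real.Gamma (c-a) * Real.Gamma (c-b)))) := by
      exact ((Real.GammaSeq_tendsto_Gamma c).mul (Real.GammaSeq_tendsto_Gamma (c-a-b))).div
        ((Real.GammaSeq_tendsto_Gamma (c-a)).mul (Real.GammaSeq_tendsto_Gamma (c-b)))
        (mul_ne_zero hnz_ca hnz_cb)
    have hPid : ∀ n : ℕ, 1 ≤ n → P (n+1) =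
        Real.GammaSeq c n * Real.GammaSeq (c-a-b) n /
          (Real.GammaSeq (c-a) n * Real.GammaSeq (c-b) n) := by
      intro n hn
      have hn0 : (0:ℝ) < n := by exact_mod_cast hn
      have e1 : ∀ x : ℝ, Real.GammaSeq x n = (n:ℝ) ^ x * n.factorial / poch x (n+1) := by
        intro x
        rw [Real.GammaSeq, poch_prod]
      rw [hP]
      simp only
      rw [e1, e1, e1, e1]
      have hpc : poch c (n+1) ≠ 0 := poch_ne_zero (fun k => by
        have := hcz k; push_cast at this ⊢; exact this) (n+1)
      have hpca : poch (c-a) (n+1) ≠ 0 := poch_ne_zero hca (n+1)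
      have hpcb : poch (c-b) (n+1) ≠ 0 := poch_ne_zero hcb (n+1)
      have hpd : poch (c-a-b) (n+1) ≠ 0 := (poch_pos hd (n+1)).ne'
      have hfn : (n.factorial : ℝ) ≠ 0 := by exact_mod_cast n.factorial_pos.ne'
      have hr1 : (0:ℝ) < (n:ℝ) ^ (c-a) := Real.rpow_pos_of_pos hn0 _
      have hr2 : (0:ℝ) < (n:ℝ) ^ (c-b) := Real.rpow_pos_of_pos hn0 _
      have hr3 : (0:ℝ) < (n:ℝ) ^ c := Real.rpow_pos_of_pos hn0 _
      have hr4 : (0:ℝ) < (n:ℝ) ^ (c-a-b) := Real.rpow_pos_of_pos hn0 _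
      have e2 : (n:ℝ) ^ (c-a) * (n:ℝ) ^ (c-b) = (n:ℝ) ^ c * (n:ℝ) ^ (c-a-b) := by
        rw [← Real.rpow_add hn0, ← Real.rpow_add hn0]
        ring_nf
      field_simp
      linear_combination e2
    have hshift : Tendsto (fun n : ℕ => P (n+1)) atTop
        (𝓝 (Real.Gamma c * Real.Gamma (c-a-b) / (Real.Gamma (c-a) * Real.Gamma (c-b)))) := by
      apply hGSlim.congr'
      rw [EventuallyEq, eventually_atTop]
      exact ⟨1, fun n hn => (hPid n hn).symm⟩
    exact (tendsto_add_atTop_iff_nat 1).mp hshift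
  -- conclude
  have hfinal : Tendsto (fun n => P n * S n) atTop
      (𝓝 (Real.Gamma c * Real.Gamma (c-a-b) / (Real.Gamma (c-a) * Real.Gamma (c-b)) * 1)) :=
    hPlim.mul hSlim
  have hconst : Tendsto (fun n => P n * S n) atTop (𝓝 (S 0)) := by
    have : (fun n => P n * S n) = fun _ => S 0 := by
      funext n; exact (iterate n).symm
    rw [this]
    exact tendsto_const_nhds
  have := tendsto_nhds_unique hconst hfinal
  rw [mul_one] at this
  have hS0 : S 0 = ∑' k : ℕ, hterm a b c k := by
    rw [hS]; simp only; norm_num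
  rw [← hS0, this]

/-- A closed-form special case of Rosengren's identity: `₃F₂(a, b, c+1; c, b+m+1; 1)`. -/
theorem rosengren_special (m : ℕ) (hm : 0 < m) (a b c : ℝ)
    (hconv : (m : ℝ) - a > 0) (hc0 : c ≠ 0)
    (ha : ∀ z : ℤ, a ≠ (z : ℝ)) (hb : ∀ z : ℤ, b ≠ (z : ℝ)) (hc : ∀ z : ℤ, c ≠ (z : ℝ))
    (hab : ∀ z : ℤ, a - b ≠ (z : ℝ)) :
    ∑' k : ℕ,
        poch a k * poch b k * poch (c + 1) k /
          (poch c k * poch (b + (m : ℝ) + 1) k * (k.factorial : ℝ)) =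
      Real.Gamma ((m : ℝ) - a) * (((m : ℝ) - a) * c + a * b) *
          Real.Gamma (b + (m : ℝ) + 1) /
        (c * Real.Gamma ((m : ℝ) + 1) * Real.Gamma (b + (m : ℝ) - a + 1)) := by
  have hm1 : (1:ℝ) ≤ (m:ℝ) := by exact_mod_cast hm
  set c' : ℝ := b + m + 1 with hc'
  -- non-vanishing facts
  have hczk : ∀ k : ℕ, c + (k:ℝ) ≠ 0 := by
    intro k heq
    apply hc (-(k:ℤ))
    push_cast
    linarith
  have hc'z : ∀ k : ℕ, c' + (k:ℝ) ≠ 0 := by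
    intro k heq
    apply hb (-((m:ℤ) + 1 + k))
    push_cast
    rw [hc'] at heq
    linarith
  have hc'1z : ∀ k : ℕ, (c' + 1) + (k:ℝ) ≠ 0 := by
    intro k heq
    apply hc'z (k+1)
    push_cast
    linarith
  have hc'a : ∀ k : ℕ, c' - a + (k:ℝ) ≠ 0 := by
    intro k heq
    apply hab ((m:ℤ) + 1 + k)
    push_cast
    rw [hc'] at heq
    linarith
  have hc'b : ∀ k : ℕ, c' - b + (k:ℝ) ≠ 0 := by
    intro k heq
    rw [hc'] at heq
    have : (0:ℝ) < m + 1 + k := by positivity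
    linarith
  have hc'0 : c' ≠ 0 := by
    have := hc'z 0
    push_cast at this
    simpa using this
  -- convergence inequalities
  have h1 : a + b < c' := by rw [hc']; linarith
  have h2 : a + b + 1 < c' := by rw [hc']; linarith
  have h3 : (a+1) + (b+1) < c' + 1 := by rw [hc']; linarith
  -- Gauss evaluations
  have G1 := gauss_sum a b c' h1 hc'z hc'a hc'b
  have G2 := gauss_sum (a+1) (b+1) (c'+1) h3 hc'1z
    (fun k => by have := hc'a k; intro heq; apply this; linarith)
    (fun k => by have := hc'b k; intro heq; apply this; linarith)
  -- summability
  have sumu : Summable (hterm a b c') := summable_hterm a b c' hc'z h1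
  have sumku : Summable (fun k : ℕ => (k:ℝ) * hterm a b c' k) :=
    summable_mul_hterm a b c' hc'z h2
  -- pointwise identity for the summand
  have hpt : ∀ k : ℕ, poch a k * poch b k * poch (c + 1) k /
      (poch c k * poch c' k * (k.factorial : ℝ)) =
      hterm a b c' k + (1/c) * ((k:ℝ) * hterm a b c' k) := by
    intro k
    have hps := poch_shift c k
    have hp1 : poch c k ≠ 0 := poch_ne_zero hczk k
    have hp2 : poch c' k ≠ 0 := poch_ne_zero hc'z k
    have hp3 : (k.factorial : ℝ) ≠ 0 := by exact_mod_cast k.factorial_pos.ne'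
    rw [hterm]
    field_simp
    linear_combination (-(poch a k * poch b k)) * hps
  -- the series shift identity
  have hshift : ∑' k : ℕ, (k:ℝ) * hterm a b c' k =
      (a * b / c') * ∑' k : ℕ, hterm (a+1) (b+1) (c'+1) k := by
    rw [Summable.tsum_eq_zero_add sumku]
    simp only [Nat.cast_zero, zero_mul, zero_add]
    rw [← tsum_mul_left]
    apply tsum_congr
    intro k
    have hp2 : poch (c'+1) k ≠ 0 := poch_ne_zero hc'1z k
    have hp3 : (k.factorial : ℝ) ≠ 0 := by exact_mod_cast k.factorial_pos.ne'
    rw [hterm, hterm, poch_succ_left a, poch_succ_left b, poch_succ_left c',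
      Nat.factorial_succ]
    push_cast
    field_simp
  -- put the series together
  have hsplit : ∑' k : ℕ, poch a k * poch b k * poch (c + 1) k /
      (poch c k * poch c' k * (k.factorial : ℝ)) =
      (∑' k : ℕ, hterm a b c' k) + (1/c) * ∑' k : ℕ, (k:ℝ) * hterm a b c' k := by
    rw [← tsum_mul_left, ← Summable.tsum_add sumu (sumku.mul_left _)]
    exact tsum_congr hpt
  rw [hsplit, hshift, G1, G2]
  -- Gamma algebra
  have e1 : c' - a - b = (m:ℝ) - a + 1 := by rw [hc']; ring
  have e2 : c' - b = (m:ℝ) + 1 := by rw [hc']; ring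
  have e3 : c' + 1 - (a+1) - (b+1) = (m:ℝ) - a := by rw [hc']; ring
  have e4 : c' + 1 - (a+1) = c' - a := by ring
  have e5 : c' + 1 - (b+1) = (m:ℝ) + 1 := by rw [hc']; ring
  have e6 : b + (m:ℝ) - a + 1 = c' - a := by rw [hc']; ring
  rw [e1, e2, e3, e4, e5, e6]
  have gma : Real.Gamma ((m:ℝ) - a + 1) = ((m:ℝ) - a) * Real.Gamma ((m:ℝ) - a) :=
    Real.Gamma_add_one (by linarith)
  have gc' : Real.Gamma (c' + 1) = c' * Real.Gamma c' := Real.Gamma_add_one hc'0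
  rw [gma, gc']
  have hne1 : Real.Gamma ((m:ℝ) + 1) ≠ 0 :=
    (Real.Gamma_pos_of_pos (by linarith)).ne'
  have hne2 : Real.Gamma (c' - a) ≠ 0 := by
    apply Real.Gamma_ne_zero
    intro n heq
    apply hc'a n
    rw [heq]
    ring
  field_simp
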